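/- Let k be algebraically closed of characteristic 0, n ≥ 4, and p ∈ k[z] a polynomial. Consider the superalgebra automorphism φ of k[z][ζ]/(ζ²) given by φ(z) = z, φ(ζ) = e·ζ for e ∈ k*. Then φ pulls back the 1-form ω = dz + p(z)·ζ·dζ to dz + e²·p(z)·ζ·dζ; hence φ preserves the line spanned by ω (i.e., φ*ω = ω) iff e² = 1, so the group of such automorphisms fixing ω is {±1} ≅ ℤ/2ℤ. -/
import Mathlib


open Polynomial

/-- Pullback of a 1-form `f·dz + g·dζ` on `k[z][ζ]/(ζ²)` (coefficients `f = f₀ + ζf₁`,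
`g = g₀ + ζg₁` modelled as pairs of polynomials) along the automorphism
`z ↦ z, ζ ↦ e·ζ`:  `φ*(f dz + g dζ) = φ(f)·dz + e·φ(g)·dζ` with `φ(a + ζb) = a + eζb`. -/
noncomputable def pullbackForm {k : Type*} [Field k] (e : k)
    (ω : (k[X] × k[X]) × (k[X] × k[X])) : (k[X] × k[X]) × (k[X] × k[X]) :=
  ((ω.1.1, C e * ω.1.2), (C e * ω.2.1, C (e ^ 2) * ω.2.2))

/-- Let `k` be algebraically closed of characteristic `0`, `n ≥ 4`, and `p ∈ k[z]`
nonzero (of degree `n`).  The automorphism `φ(z) = z`, `φ(ζ) = e·ζ` (`e ∈ k*`) pulls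
back the 1-form `ω = dz + p(z)·ζ·dζ` to `dz + e²·p(z)·ζ·dζ`; hence `φ*ω = ω` iff
`e² = 1`, so the group of such automorphisms fixing `ω` is `{±1} ≅ ℤ/2ℤ`. -/
theorem pullback_susy_form
    {k : Type*} [Field k] [IsAlgClosed k] [CharZero k]
    (n : ℕ) (hn : 4 ≤ n) (p : k[X]) (hp : p ≠ 0) (hdeg : p.natDegree = n) (e : kˣ) :
    pullbackForm (e : k) (((1 : k[X]), (0 : k[X])), ((0 : k[X]), p)) =
      (((1 : k[X]), (0 : k[X])), ((0 : k[X]), C ((e : k) ^ 2) * p)) ∧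
    (pullbackForm (e : k) (((1 : k[X]), (0 : k[X])), ((0 : k[X]), p)) =
        (((1 : k[X]), (0 : k[X])), ((0 : k[X]), p)) ↔ (e : k) ^ 2 = 1) ∧
    Nat.card {u : kˣ // (u : k) ^ 2 = 1} = 2 := by
  refine ⟨by simp [pullbackForm], ?_, ?_⟩
  · constructor
    · intro h
      have h2 : C ((e : k) ^ 2) * p = p := by
        simpa [pullbackForm, Prod.ext_iff] using h
      have h3 : p * C ((e : k) ^ 2) = p * 1 := by rw [mul_comm p, h2, mul_one]
      have h4 : C ((e : k) ^ 2) = C (1 : k) := by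
        simpa using mul_left_cancel₀ hp h3
      exact C_inj.mp h4
    · intro h
      simp [pullbackForm, h]
  · have hset : {u : kˣ | (u : k) ^ 2 = 1} = {1, -1} := by
      ext u
      have : (u : k) ^ 2 = 1 ↔ (u : k) = 1 ∨ (u : k) = -1 := by
        rw [sq, mul_self_eq_one_iff]
      simp only [Set.mem_setOf_eq, this, Set.mem_insert_iff, Set.mem_singleton_iff]
      constructor
      · rintro (h | h)
        · left; exact Units.ext h
        · right; exact Units.ext (by simpa using h)
      · rintro (rfl | rfl) <;> simp
    have : Nat.card {u : kˣ // (u : k) ^ 2 = 1} = Nat.card ({1, -1} : Set kˣ) := by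
      rw [← hset]; rfl
    rw [this, Nat.card_coe_set_eq, Set.ncard_pair]
    intro h
    have : (1 : k) = -1 := by
      have := congrArg (Units.val) h
      simpa using this
    have h2 : (2 : k) = 0 := by linear_combination this
    exact two_ne_zero h2
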